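/- Let m ≥ 1 be a natural number and assume a ≠ 0 (so that L ≠ 0). For every real t, ∏_{j=0}^{2m−1} |cos_λ(t + jπ/(2m·L) : a)| = |sin_λ(2m·t : a)| / 2^{2m−1}. -/

import Mathlib

open Real

/-- Product over powers of a primitive n-th root of unity. -/
lemma prod_primroot_aux (n : ℕ) (hn : 0 < n) {η : ℂ} (hη : IsPrimitiveRoot η n) (u : ℂ) :
    ∏ j ∈ Finset.range n, (u - η ^ j) = u ^ n - 1 := by
  have : NeZero n := ⟨hn.ne'⟩
  have key := hη.pow_sub_pow_eq_prod_sub_mul (x := u) (y := (1 : ℂ)) hn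
  simp only [one_pow, mul_one] at key
  rw [key]
  refine Finset.prod_bij (fun j _ => η ^ j) ?_ ?_ ?_ ?_
  · intro j hj
    rw [Polynomial.mem_nthRootsFinset hn, ← pow_mul, mul_comm, pow_mul, hη.pow_eq_one, one_pow]
  · intro j₁ hj₁ j₂ hj₂ h
    exact hη.pow_inj (Finset.mem_range.mp hj₁) (Finset.mem_range.mp hj₂) h
  · intro ζ hζ
    obtain ⟨i, hi, hiζ⟩ := hη.eq_pow_of_pow_eq_one ((Polynomial.mem_nthRootsFinset hn (1 : ℂ)).mp hζ)
    exact ⟨i, Finset.mem_range.mpr hi, hiζ⟩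
  · intro j hj; rfl

/-- ∏_{j<n} |cos(x + jπ/n)| = |sin(n x)|/2^{n-1} for even n > 0. -/
lemma prod_abs_cos_aux (n : ℕ) (hn : 0 < n) (hne : Even n) (x : ℝ) :
    ∏ j ∈ Finset.range n, |Real.cos (x + j * π / n)| = |Real.sin (n * x)| / 2 ^ (n - 1) := by
  have hnR : (n : ℂ) ≠ 0 := Nat.cast_ne_zero.mpr hn.ne'
  set u : ℂ := Complex.exp (2 * x * Complex.I) with hu
  set η : ℂ := Complex.exp (2 * π * Complex.I / n) with hη
  have hηprim : IsPrimitiveRoot η n := Complex.isPrimitiveRoot_exp n hn.ne'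
  have hu0 : u ≠ 0 := Complex.exp_ne_zero _
  -- each factor
  have hfac : ∀ j : ℕ, (1 : ℂ) + u * η ^ j
      = 2 * Complex.exp ((x + j * π / n) * Complex.I) * Complex.cos ((x : ℂ) + j * π / n) := by
    intro j
    have hpow : η ^ j = Complex.exp (2 * π * Complex.I * j / n) := by
      rw [hη, ← Complex.exp_nat_mul]; ring_nf
    rw [hpow, hu, Complex.cos, ← Complex.exp_add]
    have h1 : 2 * (x : ℂ) * Complex.I + 2 * π * Complex.I * j / n
        = ((x : ℂ) + j * π / n) * Complex.I + ((x : ℂ) + j * π / n) * Complex.I := by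
      field_simp; ring
    rw [h1, Complex.exp_add]
    set e := Complex.exp (((x : ℂ) + j * π / n) * Complex.I) with he
    have he0 : e ≠ 0 := Complex.exp_ne_zero _
    have hinv : Complex.exp (-((x : ℂ) + j * π / n) * Complex.I) = e⁻¹ := by
      rw [neg_mul, he, ← Complex.exp_neg]
    rw [hinv]
    field_simp
    ring
  -- abs of each factor
  have habs : ∀ j : ℕ, ‖(1 + u * η ^ j)‖ = 2 * |Real.cos (x + j * π / n)| := by
    intro j
    rw [hfac j]
    have hre : ((x : ℂ) + j * π / n) = ((x + j * π / n : ℝ) : ℂ) := by push_cast; ring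
    rw [hre, ← Complex.ofReal_cos]
    rw [norm_mul, norm_mul, Complex.norm_real]
    simp [Complex.norm_exp, Complex.norm_exp_ofReal_mul_I]
  -- the product of (1 + u η^j)
  have hprod : ∏ j ∈ Finset.range n, ((1 : ℂ) + u * η ^ j) = 1 - u ^ n := by
    have h1 : ∀ j ∈ Finset.range n, (1 : ℂ) + u * η ^ j = (-u) * ((-u⁻¹) - η ^ j) := by
      intro j _
      field_simp
      ring
    rw [Finset.prod_congr rfl h1, Finset.prod_mul_distrib, Finset.prod_const,
      prod_primroot_aux n hn hηprim, Finset.card_range, hne.neg_pow, hne.neg_pow, inv_pow]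
    have : u ^ n ≠ 0 := pow_ne_zero _ hu0
    field_simp
  -- 1 - u^n = -exp(nxI) * 2i sin(nx)
  have hsin : (1 : ℂ) - u ^ n
      = -Complex.exp (n * x * Complex.I) * (2 * Complex.I * Complex.sin (n * x)) := by
    rw [hu, ← Complex.exp_nat_mul, Complex.sin]
    have h2 : (n : ℂ) * (2 * x * Complex.I) = (n * x * Complex.I) + (n * x * Complex.I) := by ring
    rw [h2, Complex.exp_add]
    set e := Complex.exp ((n : ℂ) * x * Complex.I) with he
    have hinv : Complex.exp (-((n : ℂ) * x) * Complex.I) = e⁻¹ := by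
      rw [neg_mul, he, ← Complex.exp_neg]
    rw [hinv]
    have he0 : e ≠ 0 := Complex.exp_ne_zero _
    field_simp
    linear_combination (1 - e ^ 2) * Complex.I_sq
  have habsprod : ‖(1 - u ^ n)‖ = 2 * |Real.sin (n * x)| := by
    rw [hsin]
    have hre : ((n : ℂ) * x) = ((n * x : ℝ) : ℂ) := by push_cast; ring
    rw [hre, ← Complex.ofReal_sin, norm_mul, norm_mul, Complex.norm_real]
    simp [Complex.norm_exp, Complex.norm_exp_ofReal_mul_I, abs_mul]
  -- combine
  have key : ∏ j ∈ Finset.range n, (2 * |Real.cos (x + j * π / n)|)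
      = 2 * |Real.sin (n * x)| := by
    calc ∏ j ∈ Finset.range n, (2 * |Real.cos (x + j * π / n)|)
        = ∏ j ∈ Finset.range n, ‖(1 + u * η ^ j)‖ := by
          refine Finset.prod_congr rfl fun j _ => (habs j).symm
      _ = ‖(∏ j ∈ Finset.range n, ((1 : ℂ) + u * η ^ j))‖ := by
          rw [norm_prod]
      _ = ‖(1 - u ^ n)‖ := by rw [hprod]
      _ = 2 * |Real.sin (n * x)| := habsprod
  rw [Finset.prod_mul_distrib, Finset.prod_const, Finset.card_range] at key
  have h2n : (2 : ℝ) ^ n = 2 ^ (n - 1) * 2 := by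
    rw [← pow_succ, Nat.sub_add_cancel hn]
  have hpos : (0 : ℝ) < 2 ^ (n - 1) := by positivity
  rw [h2n] at key
  field_simp at key ⊢
  simp only [mul_comm π] at ⊢
  linarith

/-- ∏_{j=0}^{2m−1} |cos_λ(t + jπ/(2m·L) : a)| = |sin_λ(2m·t : a)| / 2^(2m−1). -/
theorem degenerate_prod_abs_cos (lam a : ℝ) (hlam : lam ≠ 0)
    (ha : 1 + lam * a > 0) (haz : a ≠ 0) (L : ℝ)
    (hL : L = lam⁻¹ * Real.log (1 + lam * a)) (m : ℕ) (hm : 1 ≤ m) (t : ℝ) :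
    ∏ j ∈ Finset.range (2 * m), |Real.cos ((t + j * π / (2 * m * L)) * L)|
      = |Real.sin (2 * m * t * L)| / 2 ^ (2 * m - 1) := by
  have hL0 : L ≠ 0 := by
    rw [hL]
    intro h
    rcases mul_eq_zero.mp h with h1 | h2
    · exact hlam (inv_eq_zero.mp h1 ▸ rfl)
    · have := Real.exp_log ha
      rw [h2, Real.exp_zero] at this
      have : lam * a = 0 := by linarith
      rcases mul_eq_zero.mp this with h | h
      exacts [hlam h, haz h]
  have hm0 : (0 : ℝ) < (2 * m : ℕ) := by positivity
  have hmne : ((2 * m : ℕ) : ℝ) ≠ 0 := hm0.ne'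
  have key := prod_abs_cos_aux (2 * m) (by positivity) (even_two_mul m) (t * L)
  have harg : ∀ j ∈ Finset.range (2 * m),
      |Real.cos ((t + j * π / (2 * m * L)) * L)|
        = |Real.cos (t * L + j * π / ((2 * m : ℕ) : ℝ))| := by
    intro j _
    congr 2
    push_cast
    field_simp
  rw [Finset.prod_congr rfl harg, key]
  congr 2
  push_cast
  ring
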